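/- Let S be a partial plane spread in PG(6,2) of size 16 whose hole span ⟨N⟩ has dimension 6. Then the hole set N is the disjoint union of a plane and an affine solid: there exist a 3-dimensional subspace E, a 4-dimensional subspace W and a 3-dimensional subspace E' ≤ W of V = F₂⁷ such that dim(E ∩ W) = 1, every point of E is a hole, every point of W not contained in E' is a hole, and N consists exactly of the 7 points of E together with the 8 points of W not contained in E' (these two point sets being disjoint). -/

import Mathlib

open Module

abbrev V2 : Type := Fin 7 → ZMod 2

/-- A partial plane spread in PG(6,2): a set of 3-dimensional subspaces of `V2 = F₂⁷`
(the blocks) any two distinct members of which intersect trivially. -/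
def IsPPS (S : Set (Submodule (ZMod 2) V2)) : Prop :=
  (∀ B ∈ S, finrank (ZMod 2) ↥B = 3) ∧
    ∀ B₁ ∈ S, ∀ B₂ ∈ S, B₁ ≠ B₂ → B₁ ⊓ B₂ = ⊥

/-- A point (1-dimensional subspace) of `V2` is a hole of `S` if it is contained
in no block of `S`. -/
def IsHole (S : Set (Submodule (ZMod 2) V2)) (P : Submodule (ZMod 2) V2) : Prop :=
  finrank (ZMod 2) ↥P = 1 ∧ ∀ B ∈ S, ¬ P ≤ B

/-- The number of holes of `S` contained in the subspace `X`. -/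
noncomputable def holeCount (S : Set (Submodule (ZMod 2) V2))
    (X : Submodule (ZMod 2) V2) : ℕ :=
  {P | IsHole S P ∧ P ≤ X}.ncard

/-- The span `⟨N⟩` of the set of holes of `S`. -/
noncomputable def holeSpan (S : Set (Submodule (ZMod 2) V2)) : Submodule (ZMod 2) V2 :=
  sSup {P | IsHole S P}

/-- The number of blocks of `S` contained in the subspace `H`. -/
noncomputable def blocksIn (S : Set (Submodule (ZMod 2) V2))
    (H : Submodule (ZMod 2) V2) : ℕ :=
  {B ∈ S | B ≤ H}.ncard

/-- `spec S i` = the number of hyperplanes of `V2` containing exactly `i` blocks of `S`. -/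
noncomputable def spec (S : Set (Submodule (ZMod 2) V2)) (i : ℕ) : ℕ :=
  {H : Submodule (ZMod 2) V2 | finrank (ZMod 2) ↥H = 6 ∧ blocksIn S H = i}.ncard


open Finset

namespace PPSAux

lemma zmod2_cases (a : ZMod 2) : a = 0 ∨ a = 1 := (by decide : ∀ a : ZMod 2, a = 0 ∨ a = 1) a
lemma zmod2_ne_zero {a : ZMod 2} (h : a ≠ 0) : a = 1 := by rcases zmod2_cases a with h'|h' <;> simp_all
lemma zmod2_add_self (a : ZMod 2) : a + a = 0 := (by decide : ∀ a : ZMod 2, a + a = 0) a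
lemma v2_add_self (x : V2) : x + x = 0 := by funext i; exact zmod2_add_self (x i)
lemma v2_add_cancel {x y : V2} (h : x + y = 0) : x = y := by
  have : x + (y + y) = 0 + y := by rw [← add_assoc, h]
  simpa [v2_add_self] using this

/-- The dot-product pairing as a linear map into the dual. -/
def dotL : V2 →ₗ[ZMod 2] Module.Dual (ZMod 2) V2 :=
  LinearMap.mk₂ (ZMod 2) (fun w v => ∑ i, w i * v i)
    (fun m₁ m₂ n => by simp [add_mul, Finset.sum_add_distrib])
    (fun c m n => by simp [Finset.mul_sum, mul_assoc])
    (fun m n₁ n₂ => by simp [mul_add, Finset.sum_add_distrib])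
    (fun c m n => by
      simp only [Pi.smul_apply, smul_eq_mul, Finset.mul_sum]
      exact Finset.sum_congr rfl fun i _ => by ring)

lemma dotL_apply (w v : V2) : dotL w v = ∑ i, w i * v i := rfl

lemma dotL_comm (w v : V2) : dotL w v = dotL v w := by
  simp only [dotL_apply]; exact Finset.sum_congr rfl fun i _ => mul_comm _ _

lemma dotL_single (w : V2) (i : Fin 7) : dotL w (Pi.single i 1) = w i := by
  simp only [dotL_apply]
  rw [Finset.sum_eq_single i]
  · simp
  · intro j _ hj; simp [Pi.single_apply, hj, Ne.symm hj]
  · simp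

lemma dotL_inj : Function.Injective dotL := by
  intro w w' h
  funext i
  have := congrArg (fun φ => φ (Pi.single i 1)) h
  simpa [dotL_single] using this

lemma dotL_eq_zero {w : V2} (h : dotL w = 0) : w = 0 := by
  have : w = 0 := dotL_inj (by simp [h])
  exact this

lemma dotL_surj : Function.Surjective dotL := by
  intro φ
  refine ⟨fun i => φ (Pi.single i 1), ?_⟩
  apply LinearMap.ext; intro v
  rw [dotL_apply, LinearMap.pi_apply_eq_sum_univ φ v]
  refine Finset.sum_congr rfl fun i _ => ?_
  have h1 : (Pi.single i 1 : V2) = fun j => if i = j then 1 else 0 := by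
    funext j; simp [Pi.single_apply, eq_comm]
  rw [← h1, smul_eq_mul, mul_comm]

lemma dotL_flip_eq_zero {v : V2} (h : ∀ w, dotL w v = 0) : v = 0 := by
  funext i
  have := h (Pi.single i 1)
  rw [dotL_comm, dotL_single] at this
  exact this


lemma card_V2 : Fintype.card V2 = 128 := by simp [Fintype.card_fun]

lemma finrank_V2 : finrank (ZMod 2) V2 = 7 := by simp

/-- The finset of vectors of a submodule. -/
noncomputable def toF (X : Submodule (ZMod 2) V2) : Finset V2 :=
  (Set.toFinite (X : Set V2)).toFinset

@[simp] lemma mem_toF {X : Submodule (ZMod 2) V2} {v : V2} : v ∈ toF X ↔ v ∈ X := by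
  simp [toF]

lemma card_submodule (X : Submodule (ZMod 2) V2) :
    Nat.card X = 2 ^ finrank (ZMod 2) X := by
  have : Fintype X := Fintype.ofFinite X
  have := card_eq_pow_finrank (K := ZMod 2) (V := X)
  rw [Nat.card_eq_fintype_card]
  simpa [ZMod.card] using this

lemma card_toF (X : Submodule (ZMod 2) V2) :
    (toF X).card = 2 ^ finrank (ZMod 2) X := by
  rw [← card_submodule]
  rw [toF, ← Set.ncard_eq_toFinset_card (X : Set V2) (Set.toFinite _), ← Nat.card_coe_set_eq]
  rfl

lemma zero_mem_toF (X : Submodule (ZMod 2) V2) : (0 : V2) ∈ toF X := by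
  simp

lemma finrank_le_of_card_le {X Y : Submodule (ZMod 2) V2}
    (h : (toF X).card ≤ (toF Y).card) : finrank (ZMod 2) X ≤ finrank (ZMod 2) Y := by
  rw [card_toF, card_toF] at h
  exact Nat.pow_le_pow_iff_right (by norm_num) |>.mp h

lemma finrank_eq_of_card_eq {X : Submodule (ZMod 2) V2} {k : ℕ}
    (h : (toF X).card = 2 ^ k) : finrank (ZMod 2) X = k := by
  rw [card_toF] at h
  exact Nat.pow_right_injective (le_refl 2) h

lemma toF_inf (X Y : Submodule (ZMod 2) V2) : toF (X ⊓ Y) = toF X ∩ toF Y := by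
  ext v; simp

lemma finrank_ker {φ : Module.Dual (ZMod 2) V2} (h : φ ≠ 0) :
    finrank (ZMod 2) (LinearMap.ker φ) = 6 := by
  have hr : LinearMap.range φ = ⊤ := by
    rcases eq_bot_or_eq_top (LinearMap.range φ) with hb | ht
    · exact absurd (LinearMap.range_eq_bot.mp hb) h
    · exact ht
  have := LinearMap.finrank_range_add_finrank_ker φ
  rw [hr, finrank_top, finrank_V2] at this
  simp [finrank_self] at this
  omega

lemma finrank_inf_ker (X : Submodule (ZMod 2) V2) (φ : Module.Dual (ZMod 2) V2)
    (h : ¬ X ≤ LinearMap.ker φ) :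
    finrank (ZMod 2) (X ⊓ LinearMap.ker φ : Submodule (ZMod 2) V2) + 1
      = finrank (ZMod 2) X := by
  have hφ : φ ≠ 0 := by
    rintro rfl; exact h (by simp)
  have hker : finrank (ZMod 2) (LinearMap.ker φ) = 6 := finrank_ker hφ
  have hlt : LinearMap.ker φ < X ⊔ LinearMap.ker φ := by
    obtain ⟨x, hxX, hxφ⟩ : ∃ x ∈ X, ¬ φ x = 0 := by simpa [SetLike.le_def] using h
    refine lt_of_le_of_ne le_sup_right (fun heq => hxφ ?_)
    have hx2 : x ∈ X ⊔ LinearMap.ker φ := le_sup_left (a := X) hxX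
    rw [← heq] at hx2
    exact hx2
  have h7 : finrank (ZMod 2) (X ⊔ LinearMap.ker φ : Submodule (ZMod 2) V2) = 7 := by
    have hle : finrank (ZMod 2) (X ⊔ LinearMap.ker φ : Submodule (ZMod 2) V2) ≤ 7 := by
      simpa [finrank_V2] using Submodule.finrank_le (X ⊔ LinearMap.ker φ)
    have := Submodule.finrank_lt_finrank_of_lt hlt
    omega
  have := Submodule.finrank_sup_add_finrank_inf_eq X (LinearMap.ker φ)
  rw [h7, hker] at this
  omega

/-- Two nonzero functionals over F₂ with nested kernels are equal. -/
lemma functional_eq_of_ker_le {φ φ' : Module.Dual (ZMod 2) V2} (hφ : φ ≠ 0)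
    (hφ' : φ' ≠ 0) (h : LinearMap.ker φ ≤ LinearMap.ker φ') : φ = φ' := by
  have hker : LinearMap.ker φ = LinearMap.ker φ' := by
    apply Submodule.eq_of_le_of_finrank_le h
    rw [finrank_ker hφ, finrank_ker hφ']
  apply LinearMap.ext; intro v
  by_cases hv : v ∈ LinearMap.ker φ
  · rw [LinearMap.mem_ker.mp hv, LinearMap.mem_ker.mp (hker ▸ hv)]
  · have h1 : φ v = 1 := by
      rcases (by decide : ∀ a : ZMod 2, a = 0 ∨ a = 1) (φ v) with h0 | h1
      · exact absurd (LinearMap.mem_ker.mpr h0) hv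
      · exact h1
    have h2 : φ' v = 1 := by
      have hv' : v ∉ LinearMap.ker φ' := fun hmem => hv (hker ▸ hmem)
      rcases (by decide : ∀ a : ZMod 2, a = 0 ∨ a = 1) (φ' v) with h0 | h1
      · exact absurd (LinearMap.mem_ker.mpr h0) hv'
      · exact h1
    rw [h1, h2]



lemma dotL_ne_zero {v : V2} (hv : v ≠ 0) : dotL v ≠ 0 := by
  intro h
  exact hv (dotL_inj (by simpa using h))

lemma count_single {v : V2} (hv : v ≠ 0) :
    (univ.filter (fun w : V2 => dotL w v = 0)).card = 64 := by
  have : univ.filter (fun w : V2 => dotL w v = 0) = toF (LinearMap.ker (dotL v)) := by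
    ext w
    simp only [mem_filter, mem_univ, true_and, mem_toF, LinearMap.mem_ker]
    rw [dotL_comm]
  rw [this, card_toF, finrank_ker (dotL_ne_zero hv)]
  norm_num

lemma ker_ne_of_ne {u v : V2} (hu : u ≠ 0) (hv : v ≠ 0) (huv : u ≠ v) :
    ¬ LinearMap.ker (dotL u) ≤ LinearMap.ker (dotL v) := by
  intro hle
  exact huv (dotL_inj (functional_eq_of_ker_le (dotL_ne_zero hu) (dotL_ne_zero hv) hle))

lemma count_pair {u v : V2} (hu : u ≠ 0) (hv : v ≠ 0) (huv : u ≠ v) :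
    (univ.filter (fun w : V2 => dotL w u = 0 ∧ dotL w v = 0)).card = 32 := by
  have heq : univ.filter (fun w : V2 => dotL w u = 0 ∧ dotL w v = 0)
      = toF (LinearMap.ker (dotL u) ⊓ LinearMap.ker (dotL v)) := by
    ext w
    simp only [mem_filter, mem_univ, true_and, mem_toF, Submodule.mem_inf, LinearMap.mem_ker]
    rw [dotL_comm w u, dotL_comm w v]
  rw [heq, card_toF]
  have h5 : finrank (ZMod 2) (LinearMap.ker (dotL u) ⊓ LinearMap.ker (dotL v)
      : Submodule (ZMod 2) V2) = 5 := by
    have := finrank_inf_ker (LinearMap.ker (dotL u)) (dotL v) (ker_ne_of_ne hu hv huv)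
    rw [finrank_ker (dotL_ne_zero hu)] at this
    omega
  rw [h5]
  norm_num

lemma moment1 (N : Finset V2) (h0 : ∀ v ∈ N, v ≠ 0) :
    ∑ w : V2, (N.filter (fun v => dotL w v = 0)).card = N.card * 64 := by
  have : ∀ w : V2, (N.filter (fun v => dotL w v = 0)).card
      = ∑ v ∈ N, if dotL w v = 0 then 1 else 0 := by
    intro w; rw [Finset.card_filter]
  simp_rw [this]
  rw [Finset.sum_comm]
  have : ∀ v ∈ N, (∑ w : V2, if dotL w v = 0 then 1 else 0) = 64 := by
    intro v hv
    rw [← Finset.card_filter]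
    exact count_single (h0 v hv)
  rw [Finset.sum_congr rfl this]
  simp [mul_comm]

lemma moment2 (N : Finset V2) (h0 : ∀ v ∈ N, v ≠ 0) :
    ∑ w : V2, ((N.filter (fun v => dotL w v = 0)).card) ^ 2
      = N.card * 64 + N.card * (N.card - 1) * 32 := by
  have hsq : ∀ w : V2, ((N.filter (fun v => dotL w v = 0)).card) ^ 2
      = ∑ u ∈ N, ∑ v ∈ N, if dotL w u = 0 ∧ dotL w v = 0 then 1 else 0 := by
    intro w
    rw [Finset.card_filter, pow_two, Finset.sum_mul_sum]
    refine Finset.sum_congr rfl fun u _ => Finset.sum_congr rfl fun v _ => ?_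
    by_cases h1 : dotL w u = 0 <;> by_cases h2 : dotL w v = 0 <;> simp [h1, h2]
  simp_rw [hsq]
  rw [Finset.sum_comm]
  have inner : ∀ u ∈ N, (∑ w : V2, ∑ v ∈ N, if dotL w u = 0 ∧ dotL w v = 0 then 1 else 0)
      = 64 + (N.card - 1) * 32 := by
    intro u hu
    rw [Finset.sum_comm]
    have split : ∀ v ∈ N, (∑ w : V2, if dotL w u = 0 ∧ dotL w v = 0 then 1 else 0)
        = if v = u then 64 else 32 := by
      intro v hv
      rw [← Finset.card_filter]
      by_cases hvu : v = u
      · subst hvu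
        simp only [if_pos rfl]
        rw [(by ext w; simp : univ.filter (fun w : V2 => dotL w v = 0 ∧ dotL w v = 0)
          = univ.filter (fun w : V2 => dotL w v = 0))]
        exact count_single (h0 v hv)
      · rw [if_neg hvu]
        exact count_pair (h0 u hu) (h0 v hv) (fun h => hvu h.symm)
    rw [Finset.sum_congr rfl split]
    have heach : ∀ v : V2, (if v = u then 64 else 32) = 32 + (if v = u then 32 else 0) := by
      intro v; by_cases h : v = u <;> simp [h]
    rw [Finset.sum_congr rfl (fun v _ => heach v), Finset.sum_add_distrib,
      Finset.sum_const, Finset.sum_ite_eq' N u (fun _ => 32), if_pos hu]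
    have hc : 1 ≤ N.card := Finset.card_pos.mpr ⟨u, hu⟩
    simp only [smul_eq_mul]
    omega
  rw [Finset.sum_congr rfl inner, Finset.sum_const]
  simp only [smul_eq_mul]
  have hc : N.card * (64 + (N.card - 1) * 32) = N.card * 64 + N.card * ((N.card - 1) * 32) :=
    Nat.mul_add _ _ _
  rw [hc, ← Nat.mul_assoc]


noncomputable def dotE : V2 ≃ₗ[ZMod 2] Module.Dual (ZMod 2) V2 :=
  LinearEquiv.ofBijective dotL ⟨dotL_inj, dotL_surj⟩

noncomputable def perpS (U : Submodule (ZMod 2) V2) : Submodule (ZMod 2) V2 :=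
  Submodule.comap dotL U.dualAnnihilator

lemma mem_perpS {U : Submodule (ZMod 2) V2} {w : V2} :
    w ∈ perpS U ↔ ∀ v ∈ U, dotL w v = 0 := by
  simp [perpS, Submodule.mem_dualAnnihilator]

lemma mem_perpS_span {s : Set V2} {w : V2} :
    w ∈ perpS (Submodule.span (ZMod 2) s) ↔ ∀ v ∈ s, dotL w v = 0 := by
  rw [mem_perpS]
  constructor
  · exact fun h v hv => h v (Submodule.subset_span hv)
  · intro h v hv
    have : Submodule.span (ZMod 2) s ≤ LinearMap.ker (dotL w) := by
      rw [Submodule.span_le]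
      intro x hx
      exact LinearMap.mem_ker.mpr (h x hx)
    exact LinearMap.mem_ker.mp (this hv)

lemma finrank_perpS (U : Submodule (ZMod 2) V2) :
    finrank (ZMod 2) (perpS U) + finrank (ZMod 2) U = 7 := by
  have h1 : Submodule.map (dotE : V2 →ₗ[ZMod 2] Module.Dual (ZMod 2) V2) (perpS U)
      = U.dualAnnihilator := by
    have hde : (dotE : V2 →ₗ[ZMod 2] Module.Dual (ZMod 2) V2) = dotL := rfl
    rw [hde, perpS, Submodule.map_comap_eq_of_surjective dotL_surj]
  have h2 : finrank (ZMod 2) (perpS U) = finrank (ZMod 2) U.dualAnnihilator := by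
    rw [← h1]
    exact (LinearEquiv.finrank_map_eq dotE (perpS U)).symm
  rw [h2]
  have e : (V2 ⧸ U) ≃ₗ[ZMod 2] U.dualAnnihilator := Subspace.quotEquivAnnihilator U
  have h3 := e.finrank_eq
  have h4 := Submodule.finrank_quotient_add_finrank U
  rw [finrank_V2] at h4
  omega

-- point utilities
lemma mem_span_singleton_two {v x : V2} :
    x ∈ Submodule.span (ZMod 2) {v} ↔ x = 0 ∨ x = v := by
  rw [Submodule.mem_span_singleton]
  constructor
  · rintro ⟨c, rfl⟩
    rcases (by decide : ∀ a : ZMod 2, a = 0 ∨ a = 1) c with h | h <;> subst h <;> simp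
  · rintro (rfl | rfl)
    · exact ⟨0, by simp⟩
    · exact ⟨1, by simp⟩

lemma rank_one_iff {P : Submodule (ZMod 2) V2} :
    finrank (ZMod 2) P = 1 ↔ ∃ v : V2, v ≠ 0 ∧ P = Submodule.span (ZMod 2) {v} := by
  constructor
  · intro h1
    have hcard : (toF P).card = 2 := by rw [card_toF, h1]; norm_num
    have h0 : (0 : V2) ∈ toF P := mem_toF.mpr (Submodule.zero_mem P)
    obtain ⟨v, hv, hvne⟩ : ∃ v ∈ toF P, v ≠ 0 := by
      by_contra hall
      push_neg at hall
      have : toF P ⊆ {0} := fun x hx => by simp [hall x hx]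
      have := Finset.card_le_card this
      simp [hcard] at this
    refine ⟨v, hvne, ?_⟩
    have hle : Submodule.span (ZMod 2) {v} ≤ P :=
      (Submodule.span_singleton_le_iff_mem v P).mpr (mem_toF.mp hv)
    have : finrank (ZMod 2) (Submodule.span (ZMod 2) {v}) = 1 := finrank_span_singleton hvne
    exact (Submodule.eq_of_le_of_finrank_eq hle (by rw [this, h1])).symm
  · rintro ⟨v, hv, rfl⟩
    exact finrank_span_singleton hv

lemma span_le_iff {v : V2} {B : Submodule (ZMod 2) V2} :
    Submodule.span (ZMod 2) {v} ≤ B ↔ v ∈ B :=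
  Submodule.span_singleton_le_iff_mem v B


lemma v2_neg (x : V2) : -x = x := by
  funext i
  exact (by decide : ∀ a : ZMod 2, -a = a) (x i)

lemma v2_sub (x y : V2) : x - y = x + y := by
  rw [sub_eq_add_neg, v2_neg]

lemma v2_eq_add_of_add_eq {x y z : V2} (h : x + y = z) : x = z + y := by
  have : x = z - y := eq_sub_of_add_eq h
  rwa [v2_sub] at this

lemma v2_flipψ {x y z : V2} (h : x ≠ y + z) : y ≠ x + z := by
  intro he
  exact h (by rw [he, add_assoc, v2_add_self, add_zero])


section FIB
variable (N : Finset V2) (γ₁ γ₂ γ₃ : V2)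

lemma fiber_count (p : ZMod 2 × ZMod 2 × ZMod 2 → Prop) [DecidablePred p] :
    (N.filter (fun v => p (dotL γ₁ v, dotL γ₂ v, dotL γ₃ v))).card
      = ∑ s ∈ univ.filter p,
          (N.filter (fun v => (dotL γ₁ v, dotL γ₂ v, dotL γ₃ v) = s)).card := by
  rw [Finset.card_eq_sum_card_fiberwise
    (f := fun v => (dotL γ₁ v, dotL γ₂ v, dotL γ₃ v)) (t := univ.filter p)
    (fun x hx => by
      simp only [Finset.mem_coe, Finset.mem_filter, Finset.mem_univ, true_and]
      exact (Finset.mem_filter.mp hx).2)]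
  refine Finset.sum_congr rfl fun b hb => ?_
  rw [Finset.filter_filter]
  apply congrArg
  apply Finset.filter_congr
  intro v hv
  constructor
  · exact And.right
  · intro h
    exact ⟨by rw [h]; exact (Finset.mem_filter.mp hb).2, h⟩

end FIB

open Classical in
noncomputable def holesF (S : Set (Submodule (ZMod 2) V2)) : Finset V2 :=
  univ.filter (fun v => v ≠ 0 ∧ ∀ B ∈ S, v ∉ B)

lemma mem_holesF {S : Set (Submodule (ZMod 2) V2)} {v : V2} :
    v ∈ holesF S ↔ v ≠ 0 ∧ ∀ B ∈ S, v ∉ B := by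
  simp [holesF]

lemma isHole_span_iff {S : Set (Submodule (ZMod 2) V2)} {v : V2} (hv : v ≠ 0) :
    IsHole S (Submodule.span (ZMod 2) {v}) ↔ v ∈ holesF S := by
  rw [mem_holesF]
  constructor
  · rintro ⟨-, h2⟩
    exact ⟨hv, fun B hB hvB => h2 B hB (span_le_iff.mpr hvB)⟩
  · rintro ⟨-, h2⟩
    refine ⟨rank_one_iff.mpr ⟨v, hv, rfl⟩, fun B hB hle => h2 B hB (span_le_iff.mp hle)⟩

lemma isHole_iff {S : Set (Submodule (ZMod 2) V2)} {P : Submodule (ZMod 2) V2} :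
    IsHole S P ↔ ∃ v ∈ holesF S, P = Submodule.span (ZMod 2) {v} := by
  constructor
  · intro h
    obtain ⟨v, hv, rfl⟩ := rank_one_iff.mp h.1
    exact ⟨v, (isHole_span_iff hv).mp h, rfl⟩
  · rintro ⟨v, hv, rfl⟩
    exact (isHole_span_iff (mem_holesF.mp hv).1).mpr hv

lemma holeSpan_eq (S : Set (Submodule (ZMod 2) V2)) :
    holeSpan S = Submodule.span (ZMod 2) (holesF S : Set V2) := by
  apply le_antisymm
  · rw [holeSpan, sSup_le_iff]
    rintro P hP
    obtain ⟨v, hv, rfl⟩ := isHole_iff.mp hP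
    rw [Submodule.span_le]
    intro x hx
    rw [Set.mem_singleton_iff] at hx
    subst hx
    exact Submodule.subset_span (by simpa using hv)
  · rw [Submodule.span_le]
    intro v hv
    simp only [Finset.coe_sort_coe, Finset.mem_coe] at hv
    have : IsHole S (Submodule.span (ZMod 2) {v}) :=
      (isHole_span_iff (mem_holesF.mp hv).1).mpr hv
    have hle : Submodule.span (ZMod 2) {v} ≤ holeSpan S := le_sSup this
    exact hle (Submodule.mem_span_singleton_self v)

section WithS

variable {S : Set (Submodule (ZMod 2) V2)} (hS : IsPPS S) (h16 : S.ncard = 16)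

noncomputable def Sf (S : Set (Submodule (ZMod 2) V2)) : Finset (Submodule (ZMod 2) V2) :=
  (Set.toFinite S).toFinset

lemma mem_Sf {B : Submodule (ZMod 2) V2} : B ∈ Sf S ↔ B ∈ S := by simp [Sf]

include h16 in
lemma card_Sf : (Sf S).card = 16 := by
  rw [Sf, ← Set.ncard_eq_toFinset_card S (Set.toFinite S), h16]

include hS in
lemma card_toF_block {B : Submodule (ZMod 2) V2} (hB : B ∈ S) : (toF B).card = 8 := by
  rw [card_toF, hS.1 B hB]; norm_num

noncomputable def coveredF (S : Set (Submodule (ZMod 2) V2)) : Finset V2 :=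
  (Sf S).biUnion (fun B => (toF B).erase 0)

include hS in
lemma covered_disj : ∀ B₁ ∈ Sf S, ∀ B₂ ∈ Sf S, B₁ ≠ B₂ →
    Disjoint ((toF B₁).erase 0) ((toF B₂).erase 0) := by
  intro B₁ h1 B₂ h2 hne
  rw [Finset.disjoint_left]
  intro v hv1 hv2
  have hv0 : v ≠ 0 := (Finset.mem_erase.mp hv1).1
  have : v ∈ B₁ ⊓ B₂ := Submodule.mem_inf.mpr
    ⟨mem_toF.mp (Finset.mem_erase.mp hv1).2, mem_toF.mp (Finset.mem_erase.mp hv2).2⟩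
  rw [hS.2 B₁ (mem_Sf.mp h1) B₂ (mem_Sf.mp h2) hne] at this
  exact hv0 (by simpa using this)

include hS h16 in
lemma card_coveredF : (coveredF S).card = 112 := by
  rw [coveredF, Finset.card_biUnion (covered_disj hS)]
  have : ∀ B ∈ Sf S, ((toF B).erase 0).card = 7 := by
    intro B hB
    rw [Finset.card_erase_of_mem (mem_toF.mpr (Submodule.zero_mem B)),
      card_toF_block hS (mem_Sf.mp hB)]
  rw [Finset.sum_congr rfl this, Finset.sum_const, card_Sf h16]; norm_num

lemma holesF_eq : holesF S = (univ.filter (fun v : V2 => v ≠ 0)) \ coveredF S := by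
  ext v
  simp only [mem_holesF, Finset.mem_sdiff, Finset.mem_filter, Finset.mem_univ, true_and,
    coveredF, Finset.mem_biUnion, not_exists]
  constructor
  · rintro ⟨h0, hall⟩
    refine ⟨h0, ?_⟩
    rintro B ⟨hB, hmem⟩
    exact hall B (mem_Sf.mp hB) (mem_toF.mp (Finset.mem_erase.mp hmem).2)
  · rintro ⟨h0, hall⟩
    refine ⟨h0, fun B hB hvB => ?_⟩
    exact hall B ⟨mem_Sf.mpr hB, Finset.mem_erase.mpr ⟨h0, mem_toF.mpr hvB⟩⟩

include hS h16 in
lemma card_holesF : (holesF S).card = 15 := by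
  rw [holesF_eq, Finset.card_sdiff_of_subset]
  · have h127 : (univ.filter (fun v : V2 => v ≠ 0)).card = 127 := by
      rw [Finset.filter_ne']
      rw [Finset.card_erase_of_mem (Finset.mem_univ 0), Finset.card_univ, card_V2]
    rw [h127, card_coveredF hS h16]
  · intro v hv
    simp only [coveredF, Finset.mem_biUnion] at hv
    obtain ⟨B, hB, hvB⟩ := hv
    simp only [Finset.mem_filter, Finset.mem_univ, true_and]
    exact (Finset.mem_erase.mp hvB).1

include hS h16 in
lemma holes_div (w : V2) (hw : ∃ v ∈ holesF S, dotL w v ≠ 0) :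
    ((holesF S).filter (fun v => dotL w v = 0)).card % 4 = 3 ∧
      ((holesF S).filter (fun v => dotL w v = 0)).card < 15 := by
  have hw0 : w ≠ 0 := by
    rintro rfl
    obtain ⟨v, -, hv⟩ := hw
    exact hv (by simp)
  set K := LinearMap.ker (dotL w) with hK
  have hfr : finrank (ZMod 2) K = 6 := finrank_ker (dotL_ne_zero hw0)
  have hcardK : ((toF K).erase 0).card = 63 := by
    rw [Finset.card_erase_of_mem (mem_toF.mpr (Submodule.zero_mem K)), card_toF, hfr]
    norm_num
  -- partition of nonzero vectors of K
  have hpart : (toF K).erase 0 = (coveredF S ∩ toF K)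
      ∪ ((holesF S).filter (fun v => dotL w v = 0)) := by
    ext v
    simp only [Finset.mem_erase, Finset.mem_union, Finset.mem_inter, Finset.mem_filter,
      mem_holesF]
    constructor
    · rintro ⟨h0, hvK⟩
      have hvK' : dotL w v = 0 := LinearMap.mem_ker.mp (mem_toF.mp hvK)
      by_cases hc : ∀ B ∈ S, v ∉ B
      · exact Or.inr ⟨⟨h0, hc⟩, hvK'⟩
      · push_neg at hc
        obtain ⟨B, hB, hvB⟩ := hc
        exact Or.inl ⟨by
          simp only [coveredF, Finset.mem_biUnion]
          exact ⟨B, mem_Sf.mpr hB, Finset.mem_erase.mpr ⟨h0, mem_toF.mpr hvB⟩⟩, hvK⟩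
    · rintro (⟨hvc, hvK⟩ | ⟨⟨h0, -⟩, hd⟩)
      · refine ⟨?_, hvK⟩
        simp only [coveredF, Finset.mem_biUnion] at hvc
        obtain ⟨B, -, hvB⟩ := hvc
        exact (Finset.mem_erase.mp hvB).1
      · exact ⟨h0, mem_toF.mpr (LinearMap.mem_ker.mpr hd)⟩
  have hdisj : Disjoint (coveredF S ∩ toF K) ((holesF S).filter (fun v => dotL w v = 0)) := by
    rw [Finset.disjoint_left]
    intro v hv1 hv2
    have hvc := (Finset.mem_inter.mp hv1).1
    simp only [coveredF, Finset.mem_biUnion] at hvc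
    obtain ⟨B, hB, hvB⟩ := hvc
    exact (mem_holesF.mp (Finset.mem_filter.mp hv2).1).2 B (mem_Sf.mp hB)
      (mem_toF.mp (Finset.mem_erase.mp hvB).2)
  have hsum : 63 = (coveredF S ∩ toF K).card
      + ((holesF S).filter (fun v => dotL w v = 0)).card := by
    rw [← hcardK, hpart, Finset.card_union_of_disjoint hdisj]
  -- covered ∩ K as biUnion
  have hbi : coveredF S ∩ toF K = (Sf S).biUnion (fun B => ((toF B).erase 0) ∩ toF K) := by
    ext v
    simp only [coveredF, Finset.mem_inter, Finset.mem_biUnion]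
    tauto
  have hdisj2 : ∀ B₁ ∈ Sf S, ∀ B₂ ∈ Sf S, B₁ ≠ B₂ →
      Disjoint (((toF B₁).erase 0) ∩ toF K) (((toF B₂).erase 0) ∩ toF K) := by
    intro B₁ h1 B₂ h2 hne
    exact (covered_disj hS B₁ h1 B₂ h2 hne).mono Finset.inter_subset_left
      Finset.inter_subset_left
  have hterm : ∀ B ∈ Sf S, (((toF B).erase 0) ∩ toF K).card % 4 = 3 := by
    intro B hB
    have hBS := mem_Sf.mp hB
    have h3 : finrank (ZMod 2) B = 3 := hS.1 B hBS
    have heq : ((toF B).erase 0) ∩ toF K = (toF (B ⊓ K)).erase 0 := by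
      ext v
      simp only [Finset.mem_inter, Finset.mem_erase, mem_toF, Submodule.mem_inf]
      tauto
    rw [heq, Finset.card_erase_of_mem (mem_toF.mpr (Submodule.zero_mem _)), card_toF]
    by_cases hle : B ≤ K
    · rw [inf_eq_left.mpr hle, h3]
      norm_num
    · have := finrank_inf_ker B (dotL w) hle
      rw [h3, ← hK] at this
      have h2 : finrank (ZMod 2) (B ⊓ K : Submodule (ZMod 2) V2) = 2 := by omega
      rw [h2]
      norm_num
  have hmod : (coveredF S ∩ toF K).card % 4 = 0 := by
    rw [hbi, Finset.card_biUnion (hdisj2), Finset.sum_nat_mod,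
      Finset.sum_congr rfl hterm, Finset.sum_const, card_Sf h16]
    norm_num
  have hle15 : ((holesF S).filter (fun v => dotL w v = 0)).card ≤ 15 := by
    calc ((holesF S).filter (fun v => dotL w v = 0)).card ≤ (holesF S).card :=
          Finset.card_filter_le _ _
      _ = 15 := card_holesF hS h16
  have hne15 : ((holesF S).filter (fun v => dotL w v = 0)).card ≠ 15 := by
    intro h15
    have : (holesF S).filter (fun v => dotL w v = 0) = holesF S :=
      Finset.eq_of_subset_of_card_le (Finset.filter_subset _ _)
        (by rw [h15, card_holesF hS h16])
    obtain ⟨v, hv, hvne⟩ := hw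
    rw [← this] at hv
    exact hvne (Finset.mem_filter.mp hv).2
  constructor
  · omega
  · omega

end WithS


section N15
variable (N : Finset V2)
/-- number of points of `N` in the hyperplane determined by `w`. -/
noncomputable def cN (w : V2) : ℕ := (N.filter (fun v => dotL w v = 0)).card
variable {N}
variable (h0 : ∀ v ∈ N, v ≠ 0) (hcard : N.card = 15)
  (hspan : finrank (ZMod 2) (Submodule.span (ZMod 2) (N : Set V2)) = 6)
  (hdiv : ∀ w : V2, (∃ v ∈ N, dotL w v ≠ 0) → cN N w % 4 = 3 ∧ cN N w < 15)

lemma mem_perp_iff {w : V2} : w ∈ perpS (Submodule.span (ZMod 2) (N : Set V2)) ↔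
    ∀ v ∈ N, dotL w v = 0 := by
  rw [mem_perpS_span]; simp

include hcard in
lemma cN_eq_15_iff {w : V2} :
    cN N w = 15 ↔ w ∈ perpS (Submodule.span (ZMod 2) (N : Set V2)) := by
  rw [mem_perp_iff]
  constructor
  · intro h15 v hv
    have : N.filter (fun v => dotL w v = 0) = N :=
      Finset.eq_of_subset_of_card_le (Finset.filter_subset _ _) (by rw [hcard]; exact h15.ge)
    rw [← this] at hv
    exact (Finset.mem_filter.mp hv).2
  · intro hall
    rw [cN, Finset.filter_true_of_mem hall, hcard]

include hcard hdiv in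
lemma cN_vals {w : V2} (hw : w ∉ perpS (Submodule.span (ZMod 2) (N : Set V2))) :
    cN N w = 3 ∨ cN N w = 7 ∨ cN N w = 11 := by
  have hex : ∃ v ∈ N, dotL w v ≠ 0 := by
    by_contra hc
    push_neg at hc
    exact hw (mem_perp_iff.mpr hc)
  obtain ⟨h1, h2⟩ := hdiv w hex
  omega

include hspan in
lemma card_perpN : (toF (perpS (Submodule.span (ZMod 2) (N : Set V2)))).card = 2 := by
  rw [card_toF]
  have := finrank_perpS (Submodule.span (ZMod 2) (N : Set V2))
  rw [hspan] at this
  have h1 : finrank (ZMod 2) (perpS (Submodule.span (ZMod 2) (N : Set V2))) = 1 := by omega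
  rw [h1]; norm_num

-- the count of weight-12 words
include h0 hcard hspan hdiv in
lemma card_A3 :
    ((univ \ toF (perpS (Submodule.span (ZMod 2) (N : Set V2)))).filter
      (fun w => cN N w = 3)).card = 6 := by
  set P0 := perpS (Submodule.span (ZMod 2) (N : Set V2)) with hP0
  set R : Finset V2 := univ \ toF P0 with hR
  have hcardR : R.card = 126 := by
    rw [hR, Finset.card_sdiff_of_subset (Finset.subset_univ _), Finset.card_univ, card_V2,
      card_perpN hspan]
  -- values on R
  have hvalsR : ∀ w ∈ R, cN N w = 3 ∨ cN N w = 7 ∨ cN N w = 11 := by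
    intro w hw
    rw [hR, Finset.mem_sdiff] at hw
    exact cN_vals hcard hdiv (fun hmem => hw.2 (mem_toF.mpr hmem))
  -- split sums
  have hsplit : ∀ f : V2 → ℕ, ∑ w : V2, f w = ∑ w ∈ toF P0, f w + ∑ w ∈ R, f w := by
    intro f
    rw [hR, ← Finset.sum_sdiff (Finset.subset_univ (toF P0))]
    ring
  have hP0val : ∀ w ∈ toF P0, cN N w = 15 := by
    intro w hw
    exact (cN_eq_15_iff hcard).mpr (mem_toF.mp hw)
  have hsum1 : ∑ w ∈ R, cN N w = 930 := by
    have := moment1 N h0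
    rw [hcard] at this
    have h2 : ∑ w : V2, cN N w = 960 := this.trans (by norm_num)
    rw [hsplit (cN N)] at h2
    rw [Finset.sum_congr rfl hP0val, Finset.sum_const, card_perpN hspan] at h2
    simp only [smul_eq_mul] at h2
    omega
  have hsum2 : ∑ w ∈ R, (cN N w) ^ 2 = 7230 := by
    have := moment2 N h0
    rw [hcard] at this
    have h2 : ∑ w : V2, (cN N w) ^ 2 = 7680 := this.trans (by norm_num)
    rw [hsplit (fun w => (cN N w) ^ 2)] at h2
    have hP0sq : ∀ w ∈ toF P0, (cN N w) ^ 2 = 225 := by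
      intro w hw; rw [hP0val w hw]; norm_num
    rw [Finset.sum_congr rfl hP0sq, Finset.sum_const, card_perpN hspan] at h2
    simp only [smul_eq_mul] at h2
    omega
  -- partition R by value
  set A := R.filter (fun w => cN N w = 3) with hA
  set B := (R.filter (fun w => ¬ cN N w = 3)).filter (fun w => cN N w = 7) with hB
  set C := (R.filter (fun w => ¬ cN N w = 3)).filter (fun w => ¬ cN N w = 7) with hC
  have hCval : ∀ w ∈ C, cN N w = 11 := by
    intro w hw
    rw [hC, Finset.mem_filter, Finset.mem_filter] at hw
    rcases hvalsR w hw.1.1 with h | h | h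
    · exact absurd h hw.1.2
    · exact absurd h hw.2
    · exact h
  have hcards : A.card + B.card + C.card = 126 := by
    have h1 := Finset.card_filter_add_card_filter_not (s := R)
      (p := fun w => cN N w = 3)
    have h2 := Finset.card_filter_add_card_filter_not
      (s := R.filter (fun w => ¬ cN N w = 3)) (p := fun w => cN N w = 7)
    rw [← hA] at h1
    rw [← hB, ← hC] at h2
    omega
  have hsplitR : ∀ f : V2 → ℕ, ∑ w ∈ R, f w = ∑ w ∈ A, f w + ∑ w ∈ B, f w + ∑ w ∈ C, f w := by
    intro f
    have h1 : ∑ w ∈ R, f w = ∑ w ∈ R.filter (fun w => cN N w = 3), f w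
        + ∑ w ∈ R.filter (fun w => ¬ cN N w = 3), f w :=
      (Finset.sum_filter_add_sum_filter_not R _ f).symm
    have h2 : ∑ w ∈ R.filter (fun w => ¬ cN N w = 3), f w = ∑ w ∈ B, f w + ∑ w ∈ C, f w :=
      (Finset.sum_filter_add_sum_filter_not (R.filter (fun w => ¬ cN N w = 3)) _ f).symm
    rw [h1, h2, ← hA]
    ring
  have hsA : ∑ w ∈ A, cN N w = 3 * A.card := by
    rw [Finset.sum_congr rfl (fun w hw => (Finset.mem_filter.mp hw).2), Finset.sum_const]
    ring
  have hsB : ∑ w ∈ B, cN N w = 7 * B.card := by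
    rw [Finset.sum_congr rfl (fun w hw => (Finset.mem_filter.mp hw).2), Finset.sum_const]
    ring
  have hsC : ∑ w ∈ C, cN N w = 11 * C.card := by
    rw [Finset.sum_congr rfl hCval, Finset.sum_const]
    ring
  have hsA2 : ∑ w ∈ A, (cN N w) ^ 2 = 9 * A.card := by
    rw [Finset.sum_congr rfl (fun w hw => by
      rw [(Finset.mem_filter.mp hw).2]; norm_num : ∀ w ∈ A, (cN N w) ^ 2 = 9),
      Finset.sum_const]
    ring
  have hsB2 : ∑ w ∈ B, (cN N w) ^ 2 = 49 * B.card := by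
    rw [Finset.sum_congr rfl (fun w hw => by
      rw [(Finset.mem_filter.mp hw).2]; norm_num : ∀ w ∈ B, (cN N w) ^ 2 = 49),
      Finset.sum_const]
    ring
  have hsC2 : ∑ w ∈ C, (cN N w) ^ 2 = 121 * C.card := by
    rw [Finset.sum_congr rfl (fun w hw => by
      rw [hCval w hw]; norm_num : ∀ w ∈ C, (cN N w) ^ 2 = 121),
      Finset.sum_const]
    ring
  have e1 : 3 * A.card + 7 * B.card + 11 * C.card = 930 := by
    rw [← hsA, ← hsB, ← hsC, ← hsplitR (cN N), hsum1]
  have e2 : 9 * A.card + 49 * B.card + 121 * C.card = 7230 := by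
    rw [← hsA2, ← hsB2, ← hsC2, ← hsplitR (fun w => (cN N w) ^ 2), hsum2]
  omega


set_option maxHeartbeats 2000000 in
include h0 hcard hspan hdiv in
lemma gammas_exist :
    ∃ γ₁ γ₂ γ₃ : V2,
      γ₁ + γ₂ + γ₃ ∉ perpS (Submodule.span (ZMod 2) (N : Set V2)) ∧
      (N.filter (fun v => (dotL γ₁ v, dotL γ₂ v, dotL γ₃ v) = (0,0,0))).card = 1 ∧
      (N.filter (fun v => (dotL γ₁ v, dotL γ₂ v, dotL γ₃ v) = (0,1,1))).card = 2 ∧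
      (N.filter (fun v => (dotL γ₁ v, dotL γ₂ v, dotL γ₃ v) = (1,0,1))).card = 2 ∧
      (N.filter (fun v => (dotL γ₁ v, dotL γ₂ v, dotL γ₃ v) = (1,1,1))).card = 8 := by
  classical
  set P0 := perpS (Submodule.span (ZMod 2) (N : Set V2)) with hP0def
  set R : Finset V2 := univ \ toF P0 with hRdef
  have hmemR : ∀ {w : V2}, w ∈ R ↔ w ∉ P0 := by
    intro w
    rw [hRdef, Finset.mem_sdiff]
    simp [mem_toF]
  set A3 := R.filter (fun w => cN N w = 3) with hA3def
  have hA3card : A3.card = 6 := card_A3 h0 hcard hspan hdiv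
  have hmemA3 : ∀ {w : V2}, w ∈ A3 ↔ (w ∉ P0 ∧ cN N w = 3) := by
    intro w
    rw [hA3def, Finset.mem_filter, hmemR]
  -- ψ : the nonzero vector of P0
  obtain ⟨ψ, hψne, hψP0mem⟩ : ∃ ψ : V2, ψ ≠ 0 ∧ toF P0 = {0, ψ} := by
    have hc2 : (toF P0).card = 2 := card_perpN hspan
    have h0mem : (0 : V2) ∈ toF P0 := mem_toF.mpr (Submodule.zero_mem _)
    have hc1 : ((toF P0).erase 0).card = 1 := by
      rw [Finset.card_erase_of_mem h0mem, hc2]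
    obtain ⟨ψ, hψ⟩ := Finset.card_eq_one.mp hc1
    have hψmem : ψ ∈ (toF P0).erase 0 := by rw [hψ]; exact Finset.mem_singleton_self ψ
    refine ⟨ψ, (Finset.mem_erase.mp hψmem).1, ?_⟩
    rw [← Finset.insert_erase h0mem, hψ]
  have hmemP0 : ∀ {x : V2}, x ∈ P0 ↔ (x = 0 ∨ x = ψ) := by
    intro x
    rw [← mem_toF, hψP0mem]
    simp
  have hψP0 : ψ ∈ P0 := hmemP0.mpr (Or.inr rfl)
  have hψkill : ∀ v ∈ N, dotL ψ v = 0 := fun v hv => mem_perp_iff.mp hψP0 v hv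
  have hcNψ : ∀ w : V2, cN N (w + ψ) = cN N w := by
    intro w
    show (N.filter (fun v => dotL (w + ψ) v = 0)).card = (N.filter (fun v => dotL w v = 0)).card
    apply congrArg
    apply Finset.filter_congr
    intro v hv
    simp [map_add, LinearMap.add_apply, hψkill v hv]
  have hP0ψ : ∀ {w : V2}, w + ψ ∈ P0 → w ∈ P0 := by
    intro w hw
    have h2 : w + ψ + ψ ∈ P0 := Submodule.add_mem _ hw hψP0
    rwa [add_assoc, v2_add_self, add_zero] at h2
  have hA3ψ : ∀ {w : V2}, w ∈ A3 → w + ψ ∈ A3 := by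
    intro w hw
    obtain ⟨h1, h2⟩ := hmemA3.mp hw
    exact hmemA3.mpr ⟨fun hc => h1 (hP0ψ hc), by rw [hcNψ, h2]⟩
  have hpairP0 : ∀ {x y : V2}, x ≠ y → x ≠ y + ψ → x + y ∉ P0 := by
    intro x y hne hneψ hmem
    rcases hmemP0.mp hmem with h | h
    · exact hne (v2_add_cancel h)
    · refine hneψ ?_
      have h2 : x = ψ + y := v2_eq_add_of_add_eq h
      rw [h2, add_comm]
  have hne_selfψ : ∀ x : V2, x ≠ x + ψ := by
    intro x h
    have h2 : x + ψ = x + 0 := by rw [add_zero]; exact h.symm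
    exact hψne (add_left_cancel h2)
  -- select γ₁, γ₂, γ₃
  have hA3pos : 0 < A3.card := by omega
  obtain ⟨γ₁, hγ₁⟩ := Finset.card_pos.mp hA3pos
  have h4le : 4 ≤ (A3 \ {γ₁, γ₁ + ψ}).card := by
    have h1 := Finset.card_le_card_sdiff_add_card (s := A3) (t := {γ₁, γ₁ + ψ})
    have h2 : ({γ₁, γ₁ + ψ} : Finset V2).card ≤ 2 := Finset.card_insert_le _ _ |>.trans (by simp)
    omega
  obtain ⟨γ₂, hγ₂mem⟩ := Finset.card_pos.mp (by omega : 0 < (A3 \ {γ₁, γ₁ + ψ}).card)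
  have hγ₂ : γ₂ ∈ A3 := (Finset.mem_sdiff.mp hγ₂mem).1
  have hγ₂ne : γ₂ ≠ γ₁ ∧ γ₂ ≠ γ₁ + ψ := by
    have := (Finset.mem_sdiff.mp hγ₂mem).2
    simp only [Finset.mem_insert, Finset.mem_singleton] at this
    tauto
  have h2le : 2 ≤ ((A3 \ {γ₁, γ₁ + ψ}) \ {γ₂, γ₂ + ψ}).card := by
    have h1 := Finset.card_le_card_sdiff_add_card (s := A3 \ {γ₁, γ₁ + ψ})
      (t := {γ₂, γ₂ + ψ})
    have h2 : ({γ₂, γ₂ + ψ} : Finset V2).card ≤ 2 := Finset.card_insert_le _ _ |>.trans (by simp)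
    omega
  obtain ⟨γ₃, hγ₃mem⟩ := Finset.card_pos.mp
    (by omega : 0 < ((A3 \ {γ₁, γ₁ + ψ}) \ {γ₂, γ₂ + ψ}).card)
  have hγ₃ : γ₃ ∈ A3 := (Finset.mem_sdiff.mp (Finset.mem_sdiff.mp hγ₃mem).1).1
  have hγ₃ne1 : γ₃ ≠ γ₁ ∧ γ₃ ≠ γ₁ + ψ := by
    have := (Finset.mem_sdiff.mp (Finset.mem_sdiff.mp hγ₃mem).1).2
    simp only [Finset.mem_insert, Finset.mem_singleton] at this
    tauto
  have hγ₃ne2 : γ₃ ≠ γ₂ ∧ γ₃ ≠ γ₂ + ψ := by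
    have := (Finset.mem_sdiff.mp hγ₃mem).2
    simp only [Finset.mem_insert, Finset.mem_singleton] at this
    tauto
  have hγ₁P0 : γ₁ ∉ P0 := (hmemA3.mp hγ₁).1
  have hγ₂P0 : γ₂ ∉ P0 := (hmemA3.mp hγ₂).1
  have hγ₃P0 : γ₃ ∉ P0 := (hmemA3.mp hγ₃).1
  have hc1 : cN N γ₁ = 3 := (hmemA3.mp hγ₁).2
  have hc2 : cN N γ₂ = 3 := (hmemA3.mp hγ₂).2
  have hc3 : cN N γ₃ = 3 := (hmemA3.mp hγ₃).2
  -- pairwise sums are not in P0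
  have h12 : γ₁ + γ₂ ∉ P0 := hpairP0 (Ne.symm hγ₂ne.1) (v2_flipψ hγ₂ne.2)
  have h13 : γ₁ + γ₃ ∉ P0 := hpairP0 (Ne.symm hγ₃ne1.1) (v2_flipψ hγ₃ne1.2)
  have h23 : γ₂ + γ₃ ∉ P0 := hpairP0 (Ne.symm hγ₃ne2.1) (v2_flipψ hγ₃ne2.2)
  -- pattern counts
  set n : ZMod 2 × ZMod 2 × ZMod 2 → ℕ :=
    fun s => (N.filter (fun v => (dotL γ₁ v, dotL γ₂ v, dotL γ₃ v) = s)).card with hndef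
  have I4 : n (0,0,0) + n (0,0,1) + n (0,1,0) + n (0,1,1)
      + n (1,0,0) + n (1,0,1) + n (1,1,0) + n (1,1,1) = 15 := by
    have e : N.card = ∑ s ∈ univ.filter (fun _ : ZMod 2 × ZMod 2 × ZMod 2 => True), n s := by
      have := fiber_count N γ₁ γ₂ γ₃ (fun _ => True)
      simpa using this
    rw [hcard] at e
    rw [Finset.filter_true] at e
    rw [show (univ : Finset (ZMod 2 × ZMod 2 × ZMod 2)) =
      {(0,0,0),(0,0,1),(0,1,0),(0,1,1),(1,0,0),(1,0,1),(1,1,0),(1,1,1)} from by decide] at e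
    rw [Finset.sum_insert (by decide), Finset.sum_insert (by decide),
      Finset.sum_insert (by decide), Finset.sum_insert (by decide),
      Finset.sum_insert (by decide), Finset.sum_insert (by decide),
      Finset.sum_insert (by decide), Finset.sum_singleton] at e
    omega
  have I1 : n (0,0,0) + n (0,0,1) + n (0,1,0) + n (0,1,1) = 3 := by
    have e : cN N γ₁ = ∑ s ∈ univ.filter (fun s : ZMod 2 × ZMod 2 × ZMod 2 => s.1 = 0), n s :=
      fiber_count N γ₁ γ₂ γ₃ (fun s => s.1 = 0)
    rw [hc1] at e
    rw [show (univ.filter (fun s : ZMod 2 × ZMod 2 × ZMod 2 => s.1 = 0)) =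
      {(0,0,0),(0,0,1),(0,1,0),(0,1,1)} from by decide] at e
    rw [Finset.sum_insert (by decide), Finset.sum_insert (by decide),
      Finset.sum_insert (by decide), Finset.sum_singleton] at e
    omega
  have I2 : n (0,0,0) + n (0,0,1) + n (1,0,0) + n (1,0,1) = 3 := by
    have e : cN N γ₂ = ∑ s ∈ univ.filter (fun s : ZMod 2 × ZMod 2 × ZMod 2 => s.2.1 = 0), n s :=
      fiber_count N γ₁ γ₂ γ₃ (fun s => s.2.1 = 0)
    rw [hc2] at e
    rw [show (univ.filter (fun s : ZMod 2 × ZMod 2 × ZMod 2 => s.2.1 = 0)) =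
      {(0,0,0),(0,0,1),(1,0,0),(1,0,1)} from by decide] at e
    rw [Finset.sum_insert (by decide), Finset.sum_insert (by decide),
      Finset.sum_insert (by decide), Finset.sum_singleton] at e
    omega
  have I3 : n (0,0,0) + n (0,1,0) + n (1,0,0) + n (1,1,0) = 3 := by
    have e : cN N γ₃ = ∑ s ∈ univ.filter (fun s : ZMod 2 × ZMod 2 × ZMod 2 => s.2.2 = 0), n s :=
      fiber_count N γ₁ γ₂ γ₃ (fun s => s.2.2 = 0)
    rw [hc3] at e
    rw [show (univ.filter (fun s : ZMod 2 × ZMod 2 × ZMod 2 => s.2.2 = 0)) =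
      {(0,0,0),(0,1,0),(1,0,0),(1,1,0)} from by decide] at e
    rw [Finset.sum_insert (by decide), Finset.sum_insert (by decide),
      Finset.sum_insert (by decide), Finset.sum_singleton] at e
    omega
  -- sums of two/three gammas
  have hpred2 : ∀ (a b : V2), cN N (a + b) = (N.filter (fun v => dotL a v + dotL b v = 0)).card := by
    intro a b
    show (N.filter (fun v => dotL (a + b) v = 0)).card = _
    apply congrArg
    apply Finset.filter_congr
    intro v _
    simp [map_add, LinearMap.add_apply]
  have I5 : cN N (γ₁ + γ₂) = n (0,0,0) + n (0,0,1) + n (1,1,0) + n (1,1,1) := by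
    have e : (N.filter (fun v => dotL γ₁ v + dotL γ₂ v = 0)).card
        = ∑ s ∈ univ.filter (fun s : ZMod 2 × ZMod 2 × ZMod 2 => s.1 + s.2.1 = 0), n s :=
      fiber_count N γ₁ γ₂ γ₃ (fun s => s.1 + s.2.1 = 0)
    rw [hpred2, e]
    rw [show (univ.filter (fun s : ZMod 2 × ZMod 2 × ZMod 2 => s.1 + s.2.1 = 0)) =
      {(0,0,0),(0,0,1),(1,1,0),(1,1,1)} from by decide]
    rw [Finset.sum_insert (by decide), Finset.sum_insert (by decide),
      Finset.sum_insert (by decide), Finset.sum_singleton]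
    ring
  have I6 : cN N (γ₁ + γ₃) = n (0,0,0) + n (0,1,0) + n (1,0,1) + n (1,1,1) := by
    have e : (N.filter (fun v => dotL γ₁ v + dotL γ₃ v = 0)).card
        = ∑ s ∈ univ.filter (fun s : ZMod 2 × ZMod 2 × ZMod 2 => s.1 + s.2.2 = 0), n s :=
      fiber_count N γ₁ γ₂ γ₃ (fun s => s.1 + s.2.2 = 0)
    rw [hpred2, e]
    rw [show (univ.filter (fun s : ZMod 2 × ZMod 2 × ZMod 2 => s.1 + s.2.2 = 0)) =
      {(0,0,0),(0,1,0),(1,0,1),(1,1,1)} from by decide]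
    rw [Finset.sum_insert (by decide), Finset.sum_insert (by decide),
      Finset.sum_insert (by decide), Finset.sum_singleton]
    ring
  have I7 : cN N (γ₂ + γ₃) = n (0,0,0) + n (1,0,0) + n (0,1,1) + n (1,1,1) := by
    have e : (N.filter (fun v => dotL γ₂ v + dotL γ₃ v = 0)).card
        = ∑ s ∈ univ.filter (fun s : ZMod 2 × ZMod 2 × ZMod 2 => s.2.1 + s.2.2 = 0), n s :=
      fiber_count N γ₁ γ₂ γ₃ (fun s => s.2.1 + s.2.2 = 0)
    rw [hpred2, e]
    rw [show (univ.filter (fun s : ZMod 2 × ZMod 2 × ZMod 2 => s.2.1 + s.2.2 = 0)) =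
      {(0,0,0),(1,0,0),(0,1,1),(1,1,1)} from by decide]
    rw [Finset.sum_insert (by decide), Finset.sum_insert (by decide),
      Finset.sum_insert (by decide), Finset.sum_singleton]
    ring
  have I8 : cN N (γ₁ + γ₂ + γ₃)
      = n (0,0,0) + n (0,1,1) + n (1,0,1) + n (1,1,0) := by
    have hpred3 : cN N (γ₁ + γ₂ + γ₃)
        = (N.filter (fun v => dotL γ₁ v + dotL γ₂ v + dotL γ₃ v = 0)).card := by
      show (N.filter (fun v => dotL (γ₁ + γ₂ + γ₃) v = 0)).card = _
      apply congrArg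
      apply Finset.filter_congr
      intro v _
      simp [map_add, LinearMap.add_apply]
    have e : (N.filter (fun v => dotL γ₁ v + dotL γ₂ v + dotL γ₃ v = 0)).card
        = ∑ s ∈ univ.filter (fun s : ZMod 2 × ZMod 2 × ZMod 2 => s.1 + s.2.1 + s.2.2 = 0), n s :=
      fiber_count N γ₁ γ₂ γ₃ (fun s => s.1 + s.2.1 + s.2.2 = 0)
    rw [hpred3, e]
    rw [show (univ.filter (fun s : ZMod 2 × ZMod 2 × ZMod 2 => s.1 + s.2.1 + s.2.2 = 0)) =
      {(0,0,0),(0,1,1),(1,0,1),(1,1,0)} from by decide]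
    rw [Finset.sum_insert (by decide), Finset.sum_insert (by decide),
      Finset.sum_insert (by decide), Finset.sum_singleton]
    ring
  -- values of the pairwise sums
  have hv12 : cN N (γ₁ + γ₂) = 11 := by
    rcases cN_vals hcard hdiv h12 with h | h | h <;> omega
  have hv13 : cN N (γ₁ + γ₃) = 11 := by
    rcases cN_vals hcard hdiv h13 with h | h | h <;> omega
  have hv23 : cN N (γ₂ + γ₃) = 11 := by
    rcases cN_vals hcard hdiv h23 with h | h | h <;> omega
  -- δ := γ₁+γ₂+γ₃ is not in P0
  have hδ : γ₁ + γ₂ + γ₃ ∉ P0 := by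
    intro hmem
    rcases hmemP0.mp hmem with h | h
    · have h3 : γ₁ + γ₂ = γ₃ := v2_add_cancel h
      rw [← h3] at hc3
      omega
    · have h3 : γ₃ = (γ₁ + γ₂) + ψ := by
        have := v2_eq_add_of_add_eq (x := γ₃) (y := γ₁ + γ₂) (z := ψ) (by rw [add_comm]; exact h)
        rwa [add_comm ψ _] at this
      rw [h3, hcNψ, hv12] at hc3
      omega
  -- cN δ ≠ 3 via the 8-element subset of A3
  have hδ3 : cN N (γ₁ + γ₂ + γ₃) ≠ 3 := by
    intro h3
    set δ := γ₁ + γ₂ + γ₃ with hδdef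
    have hδA3 : δ ∈ A3 := hmemA3.mpr ⟨hδ, h3⟩
    -- distinctness facts
    have hδg1 : δ ≠ γ₁ := by
      intro h
      have : γ₁ + (γ₂ + γ₃) = γ₁ + 0 := by
        rw [add_zero, ← add_assoc]
        exact h
      have h2 : γ₂ + γ₃ = 0 := add_left_cancel this
      exact hγ₃ne2.1 (v2_add_cancel h2).symm
    have hδg1ψ : δ ≠ γ₁ + ψ := by
      intro h
      have : γ₁ + (γ₂ + γ₃) = γ₁ + ψ := by rw [← add_assoc]; exact h
      have h2 : γ₂ + γ₃ = ψ := add_left_cancel this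
      exact h23 (h2 ▸ hψP0)
    have hδg2 : δ ≠ γ₂ := by
      intro h
      have h' : γ₂ + (γ₁ + γ₃) = γ₂ + 0 := by
        rw [add_zero]
        calc γ₂ + (γ₁ + γ₃) = γ₁ + γ₂ + γ₃ := by abel
        _ = γ₂ := h
      have h2 : γ₁ + γ₃ = 0 := add_left_cancel h'
      exact hγ₃ne1.1 (v2_add_cancel h2).symm
    have hδg2ψ : δ ≠ γ₂ + ψ := by
      intro h
      have h' : γ₂ + (γ₁ + γ₃) = γ₂ + ψ := by
        calc γ₂ + (γ₁ + γ₃) = γ₁ + γ₂ + γ₃ := by abel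
        _ = γ₂ + ψ := h
      have h2 : γ₁ + γ₃ = ψ := add_left_cancel h'
      exact h13 (h2 ▸ hψP0)
    have hδg3 : δ ≠ γ₃ := by
      intro h
      have h' : γ₃ + (γ₁ + γ₂) = γ₃ + 0 := by
        rw [add_zero]
        calc γ₃ + (γ₁ + γ₂) = γ₁ + γ₂ + γ₃ := by abel
        _ = γ₃ := h
      have h2 : γ₁ + γ₂ = 0 := add_left_cancel h'
      exact hγ₂ne.1 (v2_add_cancel h2).symm
    have hδg3ψ : δ ≠ γ₃ + ψ := by
      intro h
      have h' : γ₃ + (γ₁ + γ₂) = γ₃ + ψ := by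
        calc γ₃ + (γ₁ + γ₂) = γ₁ + γ₂ + γ₃ := by abel
        _ = γ₃ + ψ := h
      have h2 : γ₁ + γ₂ = ψ := add_left_cancel h'
      exact h12 (h2 ▸ hψP0)
    -- the four base points are distinct
    have hg12 : γ₁ ≠ γ₂ := Ne.symm hγ₂ne.1
    have hg13 : γ₁ ≠ γ₃ := Ne.symm hγ₃ne1.1
    have hg23 : γ₂ ≠ γ₃ := Ne.symm hγ₃ne2.1
    have hg1δ : γ₁ ≠ δ := Ne.symm hδg1
    have hg2δ : γ₂ ≠ δ := Ne.symm hδg2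
    have hg3δ : γ₃ ≠ δ := Ne.symm hδg3
    -- mod-ψ distinctness in both directions
    have hg12ψ : γ₁ ≠ γ₂ + ψ := v2_flipψ hγ₂ne.2
    have hg21ψ : γ₂ ≠ γ₁ + ψ := hγ₂ne.2
    have hg13ψ : γ₁ ≠ γ₃ + ψ := v2_flipψ hγ₃ne1.2
    have hg31ψ : γ₃ ≠ γ₁ + ψ := hγ₃ne1.2
    have hg23ψ : γ₂ ≠ γ₃ + ψ := v2_flipψ hγ₃ne2.2
    have hg32ψ : γ₃ ≠ γ₂ + ψ := hγ₃ne2.2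
    have hg1δψ : γ₁ ≠ δ + ψ := v2_flipψ hδg1ψ
    have hg2δψ : γ₂ ≠ δ + ψ := v2_flipψ hδg2ψ
    have hg3δψ : γ₃ ≠ δ + ψ := v2_flipψ hδg3ψ
    have hδg1ψ' : δ ≠ γ₁ + ψ := hδg1ψ
    -- the finsets
    set F4 : Finset V2 := {γ₁, γ₂, γ₃, δ} with hF4def
    have hF4card : F4.card = 4 := by
      rw [hF4def]
      rw [Finset.card_insert_of_notMem (by simp [hg12, hg13, hg1δ]),
        Finset.card_insert_of_notMem (by simp [hg23, hg2δ]),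
        Finset.card_insert_of_notMem (by simp [hg3δ]),
        Finset.card_singleton]
    have hpairdisj : ∀ {x y : V2}, x ≠ y → x ≠ y + ψ →
        Disjoint ({x, x + ψ} : Finset V2) {y, y + ψ} := by
      intro x y hne hneψ
      rw [Finset.disjoint_left]
      intro a ha hb
      simp only [Finset.mem_insert, Finset.mem_singleton] at ha hb
      rcases ha with rfl | rfl <;> rcases hb with h | h
      · exact hne h
      · exact hneψ h
      · exact (v2_flipψ hneψ) h.symm
      · exact hne (add_right_cancel h)
    have hF8card : (F4.biUnion (fun x => {x, x + ψ})).card = 8 := by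
      rw [Finset.card_biUnion]
      · have heach : ∀ x ∈ F4, ({x, x + ψ} : Finset V2).card = 2 := by
          intro x _
          rw [Finset.card_insert_of_notMem (by simp [hne_selfψ x]), Finset.card_singleton]
        rw [Finset.sum_congr rfl heach, Finset.sum_const, hF4card]
        norm_num
      · intro x hx y hy hxy
        rw [hF4def] at hx hy
        simp only [Finset.mem_coe, Finset.mem_insert, Finset.mem_singleton] at hx hy
        rcases hx with rfl | rfl | rfl | rfl <;> rcases hy with rfl | rfl | rfl | rfl <;>
          first
          | exact absurd rfl hxy
          | exact hpairdisj (by assumption) (by assumption)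
    have hF8sub : F4.biUnion (fun x => {x, x + ψ}) ⊆ A3 := by
      intro a ha
      rw [Finset.mem_biUnion] at ha
      obtain ⟨x, hx, hax⟩ := ha
      have hxA3 : x ∈ A3 := by
        rw [hF4def] at hx
        simp only [Finset.mem_insert, Finset.mem_singleton] at hx
        rcases hx with rfl | rfl | rfl | rfl
        · exact hγ₁
        · exact hγ₂
        · exact hγ₃
        · exact hδA3
      simp only [Finset.mem_insert, Finset.mem_singleton] at hax
      rcases hax with rfl | rfl
      · exact hxA3
      · exact hA3ψ hxA3
    have := Finset.card_le_card hF8sub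
    rw [hF8card, hA3card] at this
    omega
  have hδval : cN N (γ₁ + γ₂ + γ₃) = 7 ∨ cN N (γ₁ + γ₂ + γ₃) = 11 := by
    rcases cN_vals hcard hdiv hδ with h | h | h
    · exact absurd h hδ3
    · exact Or.inl h
    · exact Or.inr h
  refine ⟨γ₁, γ₂, γ₃, hδ, ?_, ?_, ?_, ?_⟩ <;>
    · show n _ = _
      rcases hδval with h | h <;> omega


set_option maxHeartbeats 2000000 in
include h0 hcard hspan hdiv in
lemma structure_of_N :
    ∃ E W E' : Submodule (ZMod 2) V2,
      finrank (ZMod 2) E = 3 ∧ finrank (ZMod 2) W = 4 ∧ E' ≤ W ∧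
      finrank (ZMod 2) E' = 3 ∧ finrank (ZMod 2) (E ⊓ W : Submodule (ZMod 2) V2) = 1 ∧
      (∀ v : V2, v ∈ N ↔ (v ≠ 0 ∧ (v ∈ E ∨ (v ∈ W ∧ v ∉ E')))) ∧
      (∀ v : V2, v ∈ E → v ∈ W → v ∈ E') := by
  classical
  obtain ⟨γ₁, γ₂, γ₃, hδ, hn000, hn011, hn101, hn111⟩ := gammas_exist h0 hcard hspan hdiv
  set H := Submodule.span (ZMod 2) (N : Set V2) with hHdef
  have hNH : ∀ v ∈ N, v ∈ H := fun v hv => Submodule.subset_span (Finset.mem_coe.mpr hv)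
  -- pattern membership helper
  have hpat : ∀ {v : V2} {a b c : ZMod 2},
      v ∈ N.filter (fun v => (dotL γ₁ v, dotL γ₂ v, dotL γ₃ v) = (a,b,c)) ↔
        (v ∈ N ∧ dotL γ₁ v = a ∧ dotL γ₂ v = b ∧ dotL γ₃ v = c) := by
    intro v a b c
    rw [Finset.mem_filter, Prod.mk.injEq, Prod.mk.injEq]
  -- witnesses
  obtain ⟨a₀, ha₀mem⟩ := Finset.card_pos.mp (by rw [hn111]; norm_num :
    0 < (N.filter (fun v => (dotL γ₁ v, dotL γ₂ v, dotL γ₃ v) = (1,1,1))).card)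
  obtain ⟨ha₀N, ha₀1, ha₀2, ha₀3⟩ := hpat.mp ha₀mem
  obtain ⟨z, hzmem⟩ := Finset.card_pos.mp (by rw [hn011]; norm_num :
    0 < (N.filter (fun v => (dotL γ₁ v, dotL γ₂ v, dotL γ₃ v) = (0,1,1))).card)
  obtain ⟨hzN, hz1, hz2, hz3⟩ := hpat.mp hzmem
  obtain ⟨u, humem⟩ := Finset.card_pos.mp (by rw [hn101]; norm_num :
    0 < (N.filter (fun v => (dotL γ₁ v, dotL γ₂ v, dotL γ₃ v) = (1,0,1))).card)
  obtain ⟨huN, hu1, hu2, hu3⟩ := hpat.mp humem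
  obtain ⟨v₀, hv₀eq⟩ := Finset.card_eq_one.mp hn000
  have hv₀mem : v₀ ∈ N.filter (fun v => (dotL γ₁ v, dotL γ₂ v, dotL γ₃ v) = (0,0,0)) := by
    rw [hv₀eq]; exact Finset.mem_singleton_self v₀
  obtain ⟨hv₀N, hv₀1, hv₀2, hv₀3⟩ := hpat.mp hv₀mem
  -- X1
  have hH1 : ¬ H ≤ LinearMap.ker (dotL γ₁) := by
    intro hle
    have := LinearMap.mem_ker.mp (hle (hNH a₀ ha₀N))
    rw [ha₀1] at this
    exact (by decide : (1 : ZMod 2) ≠ 0) this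
  have hX1 : finrank (ZMod 2) (H ⊓ LinearMap.ker (dotL γ₁) : Submodule (ZMod 2) V2) = 5 := by
    have := finrank_inf_ker H (dotL γ₁) hH1
    rw [hspan] at this
    omega
  set X1 : Submodule (ZMod 2) V2 := H ⊓ LinearMap.ker (dotL γ₁) with hX1def
  have hH2 : ¬ X1 ≤ LinearMap.ker (dotL γ₂) := by
    intro hle
    have hzX1 : z ∈ X1 := Submodule.mem_inf.mpr ⟨hNH z hzN, LinearMap.mem_ker.mpr hz1⟩
    have := LinearMap.mem_ker.mp (hle hzX1)
    rw [hz2] at this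
    exact (by decide : (1 : ZMod 2) ≠ 0) this
  have hX2rk : finrank (ZMod 2) (X1 ⊓ LinearMap.ker (dotL γ₂) : Submodule (ZMod 2) V2) = 4 := by
    have := finrank_inf_ker X1 (dotL γ₂) hH2
    rw [hX1] at this
    omega
  set X2 : Submodule (ZMod 2) V2 := X1 ⊓ LinearMap.ker (dotL γ₂) with hX2def
  have hH3 : ¬ X2 ≤ LinearMap.ker (dotL γ₃) := by
    intro hle
    apply hδ
    rw [mem_perp_iff]
    intro v hv
    have hv' : v + dotL γ₁ v • u + dotL γ₂ v • z ∈ X2 := by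
      refine Submodule.mem_inf.mpr ⟨Submodule.mem_inf.mpr ⟨?_, ?_⟩, ?_⟩
      · exact Submodule.add_mem _ (Submodule.add_mem _ (hNH v hv)
          (Submodule.smul_mem _ _ (hNH u huN))) (Submodule.smul_mem _ _ (hNH z hzN))
      · rw [LinearMap.mem_ker, map_add, map_add, map_smul, map_smul, smul_eq_mul, smul_eq_mul,
          hu1, hz1]
        exact (by decide : ∀ a b : ZMod 2, a + a * 1 + b * 0 = 0) _ _
      · rw [LinearMap.mem_ker, map_add, map_add, map_smul, map_smul, smul_eq_mul, smul_eq_mul,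
          hu2, hz2]
        exact (by decide : ∀ a b : ZMod 2, b + a * 0 + b * 1 = 0) _ _
    have h3 := LinearMap.mem_ker.mp (hle hv')
    rw [map_add, map_add, map_smul, map_smul, smul_eq_mul, smul_eq_mul, hu3, hz3] at h3
    rw [map_add, map_add, LinearMap.add_apply, LinearMap.add_apply]
    exact (by decide : ∀ a b c : ZMod 2, c + a * 1 + b * 1 = 0 → a + b + c = 0) _ _ _ h3
  have hOm3 : finrank (ZMod 2) (X2 ⊓ LinearMap.ker (dotL γ₃) : Submodule (ZMod 2) V2) = 3 := by
    have := finrank_inf_ker X2 (dotL γ₃) hH3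
    rw [hX2rk] at this
    omega
  set Om : Submodule (ZMod 2) V2 := X2 ⊓ LinearMap.ker (dotL γ₃) with hOmdef
  have hmemOm : ∀ {x : V2}, x ∈ Om ↔
      (x ∈ H ∧ dotL γ₁ x = 0 ∧ dotL γ₂ x = 0 ∧ dotL γ₃ x = 0) := by
    intro x
    rw [hOmdef, hX2def, hX1def]
    simp only [Submodule.mem_inf, LinearMap.mem_ker]
    tauto
  -- A as a coset of Om
  set A := N.filter (fun v => (dotL γ₁ v, dotL γ₂ v, dotL γ₃ v) = (1,1,1)) with hAdef
  have hcardA : A.card = 8 := hn111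
  have ha₀A : a₀ ∈ A := ha₀mem
  have hA_coset : ∀ a ∈ A, a₀ + a ∈ Om := by
    intro a ha
    obtain ⟨haN, ha1, ha2, ha3⟩ := hpat.mp ha
    refine hmemOm.mpr ⟨Submodule.add_mem _ (hNH a₀ ha₀N) (hNH a haN), ?_, ?_, ?_⟩
    · rw [map_add, ha₀1, ha1]; decide
    · rw [map_add, ha₀2, ha2]; decide
    · rw [map_add, ha₀3, ha3]; decide
  have hAsub : A ⊆ (toF Om).image (fun x => a₀ + x) := by
    intro a ha
    refine Finset.mem_image.mpr ⟨a₀ + a, mem_toF.mpr (hA_coset a ha), ?_⟩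
    rw [← add_assoc, v2_add_self, zero_add]
  have hAeq : A = (toF Om).image (fun x => a₀ + x) := by
    apply Finset.eq_of_subset_of_card_le hAsub
    rw [Finset.card_image_of_injective _ (add_right_injective a₀), card_toF, hOm3, hcardA]
    norm_num
  have ha₀Om : a₀ ∉ Om := by
    intro h
    have := (hmemOm.mp h).2.1
    rw [ha₀1] at this
    exact (by decide : (1 : ZMod 2) ≠ 0) this
  have ha₀0 : a₀ ≠ 0 := h0 a₀ ha₀N
  -- W
  set W : Submodule (ZMod 2) V2 := Om ⊔ Submodule.span (ZMod 2) {a₀} with hWdef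
  have hinfbot : Om ⊓ Submodule.span (ZMod 2) {a₀} = ⊥ := by
    rw [eq_bot_iff]
    intro x hx
    obtain ⟨hxOm, hxsp⟩ := Submodule.mem_inf.mp hx
    rcases mem_span_singleton_two.mp hxsp with rfl | rfl
    · exact Submodule.zero_mem _
    · exact absurd hxOm ha₀Om
  have hW4 : finrank (ZMod 2) W = 4 := by
    have h1 := Submodule.finrank_sup_add_finrank_inf_eq Om (Submodule.span (ZMod 2) {a₀})
    rw [hinfbot, finrank_bot, hOm3, finrank_span_singleton ha₀0] at h1
    rw [hWdef]
    omega
  have hOmleW : Om ≤ W := le_sup_left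
  have ha₀W : a₀ ∈ W := by
    apply Submodule.mem_sup_right
    exact Submodule.mem_span_singleton_self a₀
  have htoFW : toF W = toF Om ∪ A := by
    ext x
    rw [Finset.mem_union, mem_toF, mem_toF]
    constructor
    · intro hx
      rw [hWdef] at hx
      obtain ⟨y, hy, zz, hzz, rfl⟩ := Submodule.mem_sup.mp hx
      rcases mem_span_singleton_two.mp hzz with rfl | rfl
      · rw [add_zero]
        exact Or.inl hy
      · right
        rw [hAeq]
        refine Finset.mem_image.mpr ⟨y, mem_toF.mpr hy, ?_⟩
        rw [add_comm]
    · rintro (hx | hx)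
      · exact hOmleW hx
      · rw [hAeq] at hx
        obtain ⟨y, hy, rfl⟩ := Finset.mem_image.mp hx
        exact Submodule.add_mem _ ha₀W (hOmleW (mem_toF.mp hy))
  have hAOm : ∀ a ∈ A, a ∉ Om := by
    intro a ha hOm
    obtain ⟨-, ha1, -, -⟩ := hpat.mp ha
    have := (hmemOm.mp hOm).2.1
    rw [ha1] at this
    exact (by decide : (1 : ZMod 2) ≠ 0) this
  -- B
  set Bs := N \ A with hBdef
  have hsubA : A ⊆ N := Finset.filter_subset _ _
  have hBcard : Bs.card = 7 := by
    rw [hBdef, Finset.card_sdiff_of_subset hsubA, hcard, hcardA]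
  have hB0 : ∀ v ∈ Bs, v ≠ 0 := fun v hv => h0 v (Finset.mem_sdiff.mp hv).1
  -- splitting of hyperplane counts
  have hsplit : ∀ w : V2, cN N w = (Bs.filter (fun v => dotL w v = 0)).card
      + (A.filter (fun v => dotL w v = 0)).card := by
    intro w
    show (N.filter _).card = _
    have hunion : Bs ∪ A = N := Finset.sdiff_union_of_subset hsubA
    rw [← hunion, Finset.filter_union, Finset.card_union_of_disjoint
      (Finset.disjoint_filter_filter Finset.sdiff_disjoint)]
  -- counts in A
  have hcA : ∀ w : V2, (A.filter (fun v => dotL w v = 0)).card = 0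
      ∨ (A.filter (fun v => dotL w v = 0)).card = 4
      ∨ (A.filter (fun v => dotL w v = 0)).card = 8 := by
    intro w
    have hkercard : ((toF Om).filter (fun x => dotL w x = 0)).card = 4
        ∨ ((toF Om).filter (fun x => dotL w x = 0)).card = 8 := by
      have heq : (toF Om).filter (fun x => dotL w x = 0)
          = toF (Om ⊓ LinearMap.ker (dotL w)) := by
        ext x
        simp only [Finset.mem_filter, mem_toF, Submodule.mem_inf, LinearMap.mem_ker]
      rw [heq, card_toF]
      by_cases hle : Om ≤ LinearMap.ker (dotL w)
      · rw [inf_eq_left.mpr hle, hOm3]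
        right; norm_num
      · have := finrank_inf_ker Om (dotL w) hle
        rw [hOm3] at this
        have h2 : finrank (ZMod 2) (Om ⊓ LinearMap.ker (dotL w) : Submodule (ZMod 2) V2) = 2 :=
          by omega
        rw [h2]
        left; norm_num
    have himg : (A.filter (fun v => dotL w v = 0)).card
        = ((toF Om).filter (fun x => dotL w (a₀ + x) = 0)).card := by
      rw [hAeq]
      rw [show ((toF Om).image (fun x => a₀ + x)).filter (fun v => dotL w v = 0)
          = ((toF Om).filter (fun x => dotL w (a₀ + x) = 0)).image (fun x => a₀ + x) from by
        ext y
        rw [Finset.mem_filter, Finset.mem_image]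
        constructor
        · rintro ⟨⟨x, hx, rfl⟩, hp⟩
          exact Finset.mem_image.mpr ⟨x, Finset.mem_filter.mpr ⟨hx, hp⟩, rfl⟩
        · intro hy
          obtain ⟨x, hx, rfl⟩ := Finset.mem_image.mp hy
          obtain ⟨hx1, hx2⟩ := Finset.mem_filter.mp hx
          exact ⟨⟨x, hx1, rfl⟩, hx2⟩]
      rw [Finset.card_image_of_injective _ (add_right_injective a₀)]
    by_cases hw0 : dotL w a₀ = 0
    · have hcong : (toF Om).filter (fun x => dotL w (a₀ + x) = 0)
          = (toF Om).filter (fun x => dotL w x = 0) := by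
        apply Finset.filter_congr
        intro x _
        rw [map_add, hw0, zero_add]
      rw [himg, hcong]
      right; exact hkercard
    · have hw1 : dotL w a₀ = 1 := zmod2_ne_zero hw0
      have hcong : (toF Om).filter (fun x => dotL w (a₀ + x) = 0)
          = (toF Om).filter (fun x => ¬ (dotL w x = 0)) := by
        apply Finset.filter_congr
        intro x _
        rw [map_add, hw1]
        exact (by decide : ∀ b : ZMod 2, (1 + b = 0) ↔ ¬ (b = 0)) _
      have hcards := Finset.card_filter_add_card_filter_not (s := toF Om)
        (p := fun x => dotL w x = 0)
      have hOmcard : (toF Om).card = 8 := by rw [card_toF, hOm3]; norm_num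
      rw [himg, hcong]
      rcases hkercard with h | h <;> omega
  -- counts in B
  set PB := perpS (Submodule.span (ZMod 2) (Bs : Set V2)) with hPBdef
  have hcB7 : ∀ w ∈ toF PB, (Bs.filter (fun v => dotL w v = 0)).card = 7 := by
    intro w hw
    have hall : ∀ v ∈ Bs, dotL w v = 0 := mem_perp_iff.mp (mem_toF.mp hw)
    rw [Finset.filter_true_of_mem hall, hBcard]
  have hcB3 : ∀ w : V2, w ∉ toF PB → (Bs.filter (fun v => dotL w v = 0)).card = 3 := by
    intro w hw
    have hwB : ∃ v ∈ Bs, dotL w v ≠ 0 := by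
      by_contra hc
      push_neg at hc
      exact hw (mem_toF.mpr (mem_perp_iff.mpr hc))
    have hle7 : (Bs.filter (fun v => dotL w v = 0)).card ≤ 7 := by
      calc (Bs.filter (fun v => dotL w v = 0)).card ≤ Bs.card := Finset.card_filter_le _ _
        _ = 7 := hBcard
    have hne7 : (Bs.filter (fun v => dotL w v = 0)).card ≠ 7 := by
      intro h7
      have heq : Bs.filter (fun v => dotL w v = 0) = Bs :=
        Finset.eq_of_subset_of_card_le (Finset.filter_subset _ _) (by rw [h7, hBcard])
      obtain ⟨v, hv, hvne⟩ := hwB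
      rw [← heq] at hv
      exact hvne (Finset.mem_filter.mp hv).2
    have hwP0 : w ∉ perpS (Submodule.span (ZMod 2) (N : Set V2)) := by
      intro hmem
      have hall := mem_perp_iff.mp hmem
      exact hw (mem_toF.mpr (mem_perp_iff.mpr
        (fun v hv => hall v (Finset.mem_sdiff.mp hv).1)))
    have hvals := cN_vals hcard hdiv hwP0
    have hs := hsplit w
    rcases hcA w with h | h | h <;> rcases hvals with h' | h' | h' <;> omega
  have hSB : ∑ w : V2, (Bs.filter (fun v => dotL w v = 0)).card = 448 := by
    have := moment1 Bs hB0
    rw [hBcard] at this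
    exact this.trans (by norm_num)
  have hPBcard : (toF PB).card = 16 := by
    have hsplitU : ∑ w : V2, (Bs.filter (fun v => dotL w v = 0)).card
        = ∑ w ∈ toF PB, (Bs.filter (fun v => dotL w v = 0)).card
          + ∑ w ∈ univ \ toF PB, (Bs.filter (fun v => dotL w v = 0)).card := by
      rw [← Finset.sum_sdiff (Finset.subset_univ (toF PB))]
      ring
    rw [hSB] at hsplitU
    rw [Finset.sum_congr rfl hcB7, Finset.sum_const] at hsplitU
    rw [Finset.sum_congr rfl (fun w hw => hcB3 w (Finset.mem_sdiff.mp hw).2),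
      Finset.sum_const] at hsplitU
    have hc1 : (univ \ toF PB).card = 128 - (toF PB).card := by
      rw [Finset.card_sdiff_of_subset (Finset.subset_univ _), Finset.card_univ, card_V2]
    have hle : (toF PB).card ≤ 128 := by
      calc (toF PB).card ≤ (univ : Finset V2).card := Finset.card_le_univ _
        _ = 128 := by rw [Finset.card_univ, card_V2]
    simp only [smul_eq_mul] at hsplitU
    omega
  have hPB4 : finrank (ZMod 2) PB = 4 := finrank_eq_of_card_eq (by rw [hPBcard]; norm_num)
  have hU3 : finrank (ZMod 2) (Submodule.span (ZMod 2) (Bs : Set V2)) = 3 := by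
    have := finrank_perpS (Submodule.span (ZMod 2) (Bs : Set V2))
    rw [← hPBdef, hPB4] at this
    omega
  set U : Submodule (ZMod 2) V2 := Submodule.span (ZMod 2) (Bs : Set V2) with hUdef
  have htoFU : toF U = insert 0 Bs := by
    have h0nB : (0 : V2) ∉ Bs := fun h => hB0 0 h rfl
    apply Finset.eq_of_subset_of_card_le ?hsub ?hcard |>.symm
    case hsub =>
      intro x hx
      rcases Finset.mem_insert.mp hx with rfl | hxB
      · exact mem_toF.mpr (Submodule.zero_mem _)
      · exact mem_toF.mpr (Submodule.subset_span (Finset.mem_coe.mpr hxB))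
    case hcard =>
      rw [Finset.card_insert_of_notMem h0nB, hBcard, card_toF, hU3]
      norm_num
  -- v₀ facts
  have hv₀Bs : v₀ ∈ Bs := by
    rw [hBdef, Finset.mem_sdiff]
    refine ⟨hv₀N, fun hmem => ?_⟩
    obtain ⟨-, h1, -, -⟩ := hpat.mp hmem
    rw [hv₀1] at h1
    exact (by decide : (0 : ZMod 2) ≠ 1) h1
  have hv₀Om : v₀ ∈ Om := hmemOm.mpr ⟨hNH v₀ hv₀N, hv₀1, hv₀2, hv₀3⟩
  have hv₀0 : v₀ ≠ 0 := h0 v₀ hv₀N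
  have htoFEW : toF (U ⊓ W) = {0, v₀} := by
    ext x
    rw [mem_toF, Submodule.mem_inf, Finset.mem_insert, Finset.mem_singleton]
    constructor
    · rintro ⟨hxU, hxW⟩
      have hx1 : x ∈ insert 0 Bs := by rw [← htoFU]; exact mem_toF.mpr hxU
      rcases Finset.mem_insert.mp hx1 with rfl | hxB
      · exact Or.inl rfl
      · right
        have hx2 : x ∈ toF Om ∪ A := by rw [← htoFW]; exact mem_toF.mpr hxW
        rcases Finset.mem_union.mp hx2 with hxOm | hxA
        · have hOmx := hmemOm.mp (mem_toF.mp hxOm)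
          have hxN : x ∈ N := (Finset.mem_sdiff.mp hxB).1
          have : x ∈ N.filter (fun v => (dotL γ₁ v, dotL γ₂ v, dotL γ₃ v) = (0,0,0)) :=
            hpat.mpr ⟨hxN, hOmx.2.1, hOmx.2.2.1, hOmx.2.2.2⟩
          rw [hv₀eq] at this
          exact Finset.mem_singleton.mp this
        · exact absurd hxA (Finset.mem_sdiff.mp hxB).2
    · rintro (rfl | rfl)
      · exact ⟨Submodule.zero_mem _, Submodule.zero_mem _⟩
      · exact ⟨Submodule.subset_span (Finset.mem_coe.mpr hv₀Bs), hOmleW hv₀Om⟩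
  have hEW1 : finrank (ZMod 2) (U ⊓ W : Submodule (ZMod 2) V2) = 1 := by
    apply finrank_eq_of_card_eq
    rw [htoFEW]
    rw [Finset.card_insert_of_notMem (by simp [Ne.symm hv₀0]), Finset.card_singleton]
    norm_num
  refine ⟨U, W, Om, hU3, hW4, hOmleW, hOm3, hEW1, ?_, ?_⟩
  · intro v
    constructor
    · intro hv
      refine ⟨h0 v hv, ?_⟩
      by_cases hvA : v ∈ A
      · refine Or.inr ⟨?_, hAOm v hvA⟩
        have : v ∈ toF W := by rw [htoFW]; exact Finset.mem_union_right _ hvA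
        exact mem_toF.mp this
      · refine Or.inl ?_
        exact Submodule.subset_span (Finset.mem_coe.mpr (Finset.mem_sdiff.mpr ⟨hv, hvA⟩))
    · rintro ⟨hv0, hvU | ⟨hvW, hvOm⟩⟩
      · have : v ∈ insert 0 Bs := by rw [← htoFU]; exact mem_toF.mpr hvU
        rcases Finset.mem_insert.mp this with rfl | hvB
        · exact absurd rfl hv0
        · exact (Finset.mem_sdiff.mp hvB).1
      · have : v ∈ toF Om ∪ A := by rw [← htoFW]; exact mem_toF.mpr hvW
        rcases Finset.mem_union.mp this with hvOm' | hvA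
        · exact absurd (mem_toF.mp hvOm') hvOm
        · exact hsubA hvA
  · intro v hvU hvW
    have : v ∈ toF (U ⊓ W) := mem_toF.mpr (Submodule.mem_inf.mpr ⟨hvU, hvW⟩)
    rw [htoFEW] at this
    rcases Finset.mem_insert.mp this with rfl | hvv
    · exact Submodule.zero_mem _
    · rw [Finset.mem_singleton.mp hvv]
      exact hv₀Om


end N15

end PPSAux

theorem hole_structure_n6 (S : Set (Submodule (ZMod 2) V2)) (hS : IsPPS S)
    (h16 : S.ncard = 16) (hn : finrank (ZMod 2) ↥(holeSpan S) = 6) :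
    ∃ E W E' : Submodule (ZMod 2) V2,
      finrank (ZMod 2) ↥E = 3 ∧ finrank (ZMod 2) ↥W = 4 ∧
      E' ≤ W ∧ finrank (ZMod 2) ↥E' = 3 ∧
      finrank (ZMod 2) ↥(E ⊓ W) = 1 ∧
      (∀ P : Submodule (ZMod 2) V2, finrank (ZMod 2) ↥P = 1 → P ≤ E → IsHole S P) ∧
      (∀ P : Submodule (ZMod 2) V2, finrank (ZMod 2) ↥P = 1 → P ≤ W → ¬ P ≤ E' →
        IsHole S P) ∧
      {P | IsHole S P} =
        {P : Submodule (ZMod 2) V2 | finrank (ZMod 2) ↥P = 1 ∧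
          (P ≤ E ∨ (P ≤ W ∧ ¬ P ≤ E'))} ∧
      {P : Submodule (ZMod 2) V2 | finrank (ZMod 2) ↥P = 1 ∧ P ≤ E} ∩
        {P : Submodule (ZMod 2) V2 | finrank (ZMod 2) ↥P = 1 ∧ P ≤ W ∧ ¬ P ≤ E'}
        = ∅ := by
  classical
  have h0 : ∀ v ∈ PPSAux.holesF S, v ≠ 0 := fun v hv => (PPSAux.mem_holesF.mp hv).1
  have hcard := PPSAux.card_holesF hS h16
  have hspan : finrank (ZMod 2)
      (Submodule.span (ZMod 2) ((PPSAux.holesF S : Finset V2) : Set V2)) = 6 := by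
    rw [PPSAux.holeSpan_eq] at hn
    exact hn
  have hdiv : ∀ w : V2, (∃ v ∈ PPSAux.holesF S, PPSAux.dotL w v ≠ 0) →
      PPSAux.cN (PPSAux.holesF S) w % 4 = 3 ∧ PPSAux.cN (PPSAux.holesF S) w < 15 :=
    fun w hw => PPSAux.holes_div hS h16 w hw
  obtain ⟨E, W, E', hE3, hW4, hE'W, hE'3, hEW1, hcharF, hsubF⟩ :=
    PPSAux.structure_of_N h0 hcard hspan hdiv
  refine ⟨E, W, E', hE3, hW4, hE'W, hE'3, hEW1, ?_, ?_, ?_, ?_⟩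
  · intro P hP1 hPE
    obtain ⟨v, hv0, rfl⟩ := PPSAux.rank_one_iff.mp hP1
    have hvE : v ∈ E := PPSAux.span_le_iff.mp hPE
    have hvN : v ∈ PPSAux.holesF S := (hcharF v).mpr ⟨hv0, Or.inl hvE⟩
    exact (PPSAux.isHole_span_iff hv0).mpr hvN
  · intro P hP1 hPW hPE'
    obtain ⟨v, hv0, rfl⟩ := PPSAux.rank_one_iff.mp hP1
    have hvW : v ∈ W := PPSAux.span_le_iff.mp hPW
    have hvE' : v ∉ E' := fun h => hPE' (PPSAux.span_le_iff.mpr h)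
    exact (PPSAux.isHole_span_iff hv0).mpr ((hcharF v).mpr ⟨hv0, Or.inr ⟨hvW, hvE'⟩⟩)
  · ext P
    simp only [Set.mem_setOf_eq]
    constructor
    · intro hP
      obtain ⟨v, hvN, rfl⟩ := PPSAux.isHole_iff.mp hP
      have hv0 : v ≠ 0 := (PPSAux.mem_holesF.mp hvN).1
      refine ⟨PPSAux.rank_one_iff.mpr ⟨v, hv0, rfl⟩, ?_⟩
      rcases ((hcharF v).mp hvN).2 with h | ⟨h1, h2⟩
      · exact Or.inl (PPSAux.span_le_iff.mpr h)
      · exact Or.inr ⟨PPSAux.span_le_iff.mpr h1, fun hc => h2 (PPSAux.span_le_iff.mp hc)⟩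
    · rintro ⟨hP1, hPcase⟩
      obtain ⟨v, hv0, rfl⟩ := PPSAux.rank_one_iff.mp hP1
      refine (PPSAux.isHole_span_iff hv0).mpr ?_
      rcases hPcase with h | ⟨h1, h2⟩
      · exact (hcharF v).mpr ⟨hv0, Or.inl (PPSAux.span_le_iff.mp h)⟩
      · exact (hcharF v).mpr ⟨hv0, Or.inr ⟨PPSAux.span_le_iff.mp h1,
          fun hc => h2 (PPSAux.span_le_iff.mpr hc)⟩⟩
  · ext P
    simp only [Set.mem_inter_iff, Set.mem_setOf_eq, Set.mem_empty_iff_false, iff_false]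
    rintro ⟨⟨hP1, hPE⟩, -, hPW, hPE'⟩
    obtain ⟨v, hv0, rfl⟩ := PPSAux.rank_one_iff.mp hP1
    exact hPE' (PPSAux.span_le_iff.mpr
      (hsubF v (PPSAux.span_le_iff.mp hPE) (PPSAux.span_le_iff.mp hPW)))
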